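/- arXiv:2509.13537 — 2 statements merged into one kernel-verified Lean document; each statement's English description precedes it below -/
import Mathlib

section
/- (Coppel's inequality) Let A : ℝ → ℝ^{n×n} be piecewise continuous and let x(t) solve ẋ = A(t)x with x(t₀) = x₀. Then for any norm |·| on ℝ^n with induced matrix measure μ, |x(t)| ≤ exp(∫_{t₀}^t μ(A(s)) ds) · |x₀| for all t ≥ t₀. -/
open Filter Topology

/-- A function `N` is a norm on a real vector space. -/
def IsNorm {E : Type*} [AddCommGroup E] [Module ℝ E] (N : E → ℝ) : Prop :=
  (∀ v, N v = 0 ↔ v = 0) ∧ (∀ (c : ℝ) (v : E), N (c • v) = |c| * N v) ∧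
    (∀ v w, N (v + w) ≤ N v + N w)

/-- Operator norm of a (possibly rectangular) matrix induced by norms on domain and codomain. -/
noncomputable def opNorm {n m : ℕ} (Nin : (Fin m → ℝ) → ℝ) (Nout : (Fin n → ℝ) → ℝ)
    (A : Matrix (Fin n) (Fin m) ℝ) : ℝ :=
  sSup {c | ∃ v, Nin v = 1 ∧ c = Nout (A.mulVec v)}

/-- `μ` is the matrix measure (logarithmic norm) induced by the norm `N` on `ℝ^n`. -/
def IsMatMeasure {n : ℕ} (N : (Fin n → ℝ) → ℝ) (μ : Matrix (Fin n) (Fin n) ℝ → ℝ) : Prop :=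
  ∀ A : Matrix (Fin n) (Fin n) ℝ,
    Tendsto (fun t : ℝ => (opNorm N N (1 + t • A) - 1) / t) (𝓝[>] 0) (𝓝 (μ A))



open Set

section NormLemmas
variable {E : Type*} [AddCommGroup E] [Module ℝ E] {N : E → ℝ} (hN : IsNorm N)
include hN

theorem IsNorm.zero : N 0 = 0 := (hN.1 0).2 rfl

theorem IsNorm.neg (v : E) : N (-v) = N v := by
  have := hN.2.1 (-1) v
  simpa using this

theorem IsNorm.nonneg (v : E) : 0 ≤ N v := by
  have h := hN.2.2 v (-v)
  rw [add_neg_cancel, hN.zero, hN.neg] at h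
  linarith

theorem IsNorm.pos {v : E} (hv : v ≠ 0) : 0 < N v :=
  lt_of_le_of_ne (hN.nonneg v) (fun h => hv ((hN.1 v).1 h.symm))

theorem IsNorm.sub_le (v w : E) : N v ≤ N w + N (v - w) := by
  have := hN.2.2 w (v - w)
  simpa using this

theorem IsNorm.sum_le {ι : Type*} (s : Finset ι) (f : ι → E) :
    N (∑ i ∈ s, f i) ≤ ∑ i ∈ s, N (f i) :=
  Finset.le_sum_of_subadditive N hN.zero.le hN.2.2 s f

end NormLemmas

section Pi
variable {n : ℕ} {N : (Fin n → ℝ) → ℝ} (hN : IsNorm N)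
include hN

/-- Upper Lipschitz bound: `N u ≤ C ‖u‖` for the sup norm. -/
theorem IsNorm.exists_upper :
    ∃ C : ℝ, 0 ≤ C ∧ ∀ u : Fin n → ℝ, N u ≤ C * ‖u‖ := by
  classical
  refine ⟨∑ i, N (fun j => if i = j then 1 else 0), Finset.sum_nonneg fun i _ => hN.nonneg _, ?_⟩
  intro u
  calc N u = N (∑ i, u i • fun j => if i = j then (1:ℝ) else 0) := by rw [← pi_eq_sum_univ u]
    _ ≤ ∑ i, N (u i • fun j => if i = j then (1:ℝ) else 0) := hN.sum_le _ _
    _ = ∑ i, |u i| * N (fun j => if i = j then (1:ℝ) else 0) := by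
        simp_rw [hN.2.1]
    _ ≤ ∑ i, ‖u‖ * N (fun j => if i = j then (1:ℝ) else 0) := by
        refine Finset.sum_le_sum fun i _ => ?_
        exact mul_le_mul_of_nonneg_right (by simpa using norm_le_pi_norm u i) (hN.nonneg _)
    _ = (∑ i, N (fun j => if i = j then (1:ℝ) else 0)) * ‖u‖ := by
        rw [Finset.sum_mul]; exact Finset.sum_congr rfl fun i _ => mul_comm _ _

theorem IsNorm.continuous : Continuous N := by
  obtain ⟨C, hC0, hC⟩ := hN.exists_upper
  rw [Metric.continuous_iff]
  intro u ε hε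
  rcases eq_or_lt_of_le hC0 with h0 | hC0
  · refine ⟨1, one_pos, fun a _ => ?_⟩
    have h1 : N a ≤ 0 := by simpa [← h0] using hC a
    have h2 : N u ≤ 0 := by simpa [← h0] using hC u
    have := hN.nonneg a; have := hN.nonneg u
    simp only [Real.dist_eq]
    have : N a = N u := by linarith
    simpa [this]
  · refine ⟨ε / C, div_pos hε hC0, fun a ha => ?_⟩
    rw [Real.dist_eq, abs_lt]
    have h1 : N a ≤ N u + N (a - u) := hN.sub_le a u
    have h2 : N u ≤ N a + N (u - a) := hN.sub_le u a
    have h3 : N (a - u) ≤ C * ‖a - u‖ := hC _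
    have h4 : N (u - a) ≤ C * ‖u - a‖ := hC _
    have h5 : ‖a - u‖ < ε / C := by rwa [← dist_eq_norm]
    have h6 : ‖u - a‖ < ε / C := by rwa [← dist_eq_norm, dist_comm]
    have h7 : C * ‖a - u‖ < ε := by
      have := mul_lt_mul_of_pos_left h5 hC0
      rwa [mul_div_cancel₀ _ hC0.ne'] at this
    have h8 : C * ‖u - a‖ < ε := by
      have := mul_lt_mul_of_pos_left h6 hC0
      rwa [mul_div_cancel₀ _ hC0.ne'] at this
    constructor <;> linarith

/-- Lower bound: `c ‖u‖ ≤ N u` with `c > 0`. -/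
theorem IsNorm.exists_lower :
    ∃ c : ℝ, 0 < c ∧ ∀ u : Fin n → ℝ, c * ‖u‖ ≤ N u := by
  rcases Nat.eq_zero_or_pos n with hn | hn
  · refine ⟨1, one_pos, fun u => ?_⟩
    subst hn
    have : u = 0 := Subsingleton.elim u 0
    rw [this, hN.zero, norm_zero, mul_zero]
  · haveI : Nonempty (Fin n) := ⟨⟨0, hn⟩⟩
    have hsph : (Metric.sphere (0 : Fin n → ℝ) 1).Nonempty := by
      exact NormedSpace.sphere_nonempty.2 one_pos.le
    obtain ⟨v, hv, hmin⟩ := (isCompact_sphere (0 : Fin n → ℝ) 1).exists_isMinOn hsph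
      hN.continuous.continuousOn
    have hv1 : ‖v‖ = 1 := by simpa using hv
    have hvne : v ≠ 0 := by intro h; rw [h] at hv1; simp at hv1
    refine ⟨N v, hN.pos hvne, fun u => ?_⟩
    rcases eq_or_ne u 0 with rfl | hu
    · simp [hN.zero]
    · have hnu : ‖u‖ ≠ 0 := norm_ne_zero_iff.2 hu
      have hnu' : 0 < ‖u‖ := norm_pos_iff.2 hu
      have hmem : ‖u‖⁻¹ • u ∈ Metric.sphere (0 : Fin n → ℝ) 1 := by
        simp [norm_smul, abs_of_nonneg (inv_nonneg.2 hnu'.le), inv_mul_cancel₀ hnu]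
      have h3 : N v ≤ N (‖u‖⁻¹ • u) := hmin hmem
      have h2 : N (‖u‖⁻¹ • u) = ‖u‖⁻¹ * N u := by
        rw [hN.2.1, abs_of_nonneg (inv_nonneg.2 hnu'.le)]
      rw [h2] at h3
      calc N v * ‖u‖ ≤ (‖u‖⁻¹ * N u) * ‖u‖ := by
            exact mul_le_mul_of_nonneg_right h3 hnu'.le
        _ = N u := by field_simp
end Pi

/-- crude bound for `mulVec` in the sup norm -/
theorem mulVec_norm_le {n : ℕ} (M : Matrix (Fin n) (Fin n) ℝ) (u : Fin n → ℝ) :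
    ‖M.mulVec u‖ ≤ (∑ i, ∑ j, |M i j|) * ‖u‖ := by
  have hK : 0 ≤ (∑ i, ∑ j, |M i j|) * ‖u‖ :=
    mul_nonneg (Finset.sum_nonneg fun i _ => Finset.sum_nonneg fun j _ => abs_nonneg _)
      (norm_nonneg _)
  rw [pi_norm_le_iff_of_nonneg hK]
  intro i
  calc ‖M.mulVec u i‖ = |∑ j, M i j * u j| := by rfl
    _ ≤ ∑ j, |M i j * u j| := Finset.abs_sum_le_sum_abs _ _
    _ ≤ ∑ j, |M i j| * ‖u‖ := by
        refine Finset.sum_le_sum fun j _ => ?_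
        rw [abs_mul]
        exact mul_le_mul_of_nonneg_left (by simpa using norm_le_pi_norm u j) (abs_nonneg _)
    _ = (∑ j, |M i j|) * ‖u‖ := by rw [Finset.sum_mul]
    _ ≤ (∑ i, ∑ j, |M i j|) * ‖u‖ := by
        refine mul_le_mul_of_nonneg_right ?_ (norm_nonneg _)
        exact Finset.single_le_sum (f := fun i => ∑ j, |M i j|)
          (fun i _ => Finset.sum_nonneg fun j _ => abs_nonneg _) (Finset.mem_univ i)

theorem IsNorm.bddAbove_opSet {n : ℕ} {N : (Fin n → ℝ) → ℝ} (hN : IsNorm N)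
    (M : Matrix (Fin n) (Fin n) ℝ) :
    BddAbove {c | ∃ v, N v = 1 ∧ c = N (M.mulVec v)} := by
  obtain ⟨C, hC0, hC⟩ := hN.exists_upper
  obtain ⟨c, hc0, hc⟩ := hN.exists_lower
  refine ⟨C * ((∑ i, ∑ j, |M i j|) * c⁻¹), ?_⟩
  rintro x ⟨v, hv1, rfl⟩
  have hvb : ‖v‖ ≤ c⁻¹ := by
    have := hc v
    rw [hv1] at this
    rw [← mul_le_mul_iff_of_pos_left hc0, mul_inv_cancel₀ hc0.ne']
    exact this
  calc N (M.mulVec v) ≤ C * ‖M.mulVec v‖ := hC _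
    _ ≤ C * ((∑ i, ∑ j, |M i j|) * ‖v‖) :=
        mul_le_mul_of_nonneg_left (mulVec_norm_le M v) hC0
    _ ≤ C * ((∑ i, ∑ j, |M i j|) * c⁻¹) := by
        refine mul_le_mul_of_nonneg_left (mul_le_mul_of_nonneg_left hvb ?_) hC0
        exact Finset.sum_nonneg fun i _ => Finset.sum_nonneg fun j _ => abs_nonneg _

theorem IsNorm.opNorm_mulVec_le {n : ℕ} {N : (Fin n → ℝ) → ℝ} (hN : IsNorm N)
    (M : Matrix (Fin n) (Fin n) ℝ) (v : Fin n → ℝ) :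
    N (M.mulVec v) ≤ opNorm N N M * N v := by
  rcases eq_or_ne v 0 with rfl | hv
  · simp [Matrix.mulVec_zero, hN.zero]
  · have hv0 : 0 < N v := hN.pos hv
    set w : Fin n → ℝ := (N v)⁻¹ • v with hw
    have hw1 : N w = 1 := by
      rw [hw, hN.2.1, abs_of_nonneg (inv_nonneg.2 hv0.le), inv_mul_cancel₀ hv0.ne']
    have hmem : N (M.mulVec w) ∈ {c | ∃ u, N u = 1 ∧ c = N (M.mulVec u)} := ⟨w, hw1, rfl⟩
    have hle : N (M.mulVec w) ≤ opNorm N N M := le_csSup (hN.bddAbove_opSet M) hmem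
    have hvw : v = N v • w := by
      rw [hw, smul_smul, mul_inv_cancel₀ hv0.ne', one_smul]
    calc N (M.mulVec v) = N (M.mulVec (N v • w)) := by rw [← hvw]
      _ = N (N v • M.mulVec w) := by rw [Matrix.mulVec_smul]
      _ = N v * N (M.mulVec w) := by rw [hN.2.1, abs_of_nonneg hv0.le]
      _ ≤ N v * opNorm N N M := mul_le_mul_of_nonneg_left hle hv0.le
      _ = opNorm N N M * N v := mul_comm _ _

/-- Fencing lemma with only a slope condition on the boundary `B`. -/
theorem coppel_fence {f f' : ℝ → ℝ} {a b : ℝ}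
    (hf : ContinuousOn f (Icc a b))
    (hf' : ∀ x ∈ Ico a b, ∀ r, f' x < r → ∃ᶠ z in 𝓝[>] x, slope f x z < r)
    {B B' : ℝ → ℝ} (ha : f a ≤ B a) (hB : ContinuousOn B (Icc a b))
    (hB' : ∀ x ∈ Ico a b, ∀ r, r < B' x → ∀ᶠ z in 𝓝[>] x, r < slope B x z)
    (bound : ∀ x ∈ Ico a b, f x = B x → f' x < B' x) : ∀ ⦃x⦄, x ∈ Icc a b → f x ≤ B x := by
  change Icc a b ⊆ { x | f x ≤ B x }
  set s := { x | f x ≤ B x } ∩ Icc a b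
  have A : ContinuousOn (fun x => (f x, B x)) (Icc a b) := hf.prodMk hB
  have : IsClosed s := by
    simp only [s, inter_comm]
    exact A.preimage_isClosed_of_isClosed isClosed_Icc OrderClosedTopology.isClosed_le'
  apply this.Icc_subset_of_forall_exists_gt ha
  rintro x ⟨hxB : f x ≤ B x, xab⟩ y hy
  cases' hxB.lt_or_eq with hxB hxB
  · refine nonempty_of_mem (inter_mem ?_ (Ioc_mem_nhdsGT_of_mem ⟨le_rfl, hy⟩))
    have : ∀ᶠ x in 𝓝[Icc a b] x, f x < B x :=
      A x (Ico_subset_Icc_self xab) (IsOpen.mem_nhds (isOpen_lt continuous_fst continuous_snd) hxB)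
    have : ∀ᶠ x in 𝓝[>] x, f x < B x := nhdsWithin_le_of_mem (Icc_mem_nhdsGT_of_mem xab) this
    exact this.mono fun y => le_of_lt
  · rcases exists_between (bound x xab hxB) with ⟨r, hfr, hrB⟩
    specialize hf' x xab r hfr
    have HB : ∀ᶠ z in 𝓝[>] x, r < slope B x z := hB' x xab r hrB
    obtain ⟨z, hfz, hzB, hz⟩ : ∃ z, slope f x z < r ∧ r < slope B x z ∧ z ∈ Ioc x y :=
      (hf'.and_eventually (HB.and (Ioc_mem_nhdsGT_of_mem ⟨le_rfl, hy⟩))).exists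
    refine ⟨z, ?_, hz⟩
    have := (hfz.trans hzB).le
    rwa [slope_def_field, slope_def_field, div_le_div_iff_of_pos_right (sub_pos.2 hz.1), hxB,
      sub_le_sub_iff_right] at this

theorem slope_est {n : ℕ} {N : (Fin n → ℝ) → ℝ} (hN : IsNorm N)
    {μ : Matrix (Fin n) (Fin n) ℝ → ℝ} (hμ : IsMatMeasure N μ)
    {A : ℝ → Matrix (Fin n) (Fin n) ℝ} {x : ℝ → Fin n → ℝ}
    (hderiv : ∀ t : ℝ, HasDerivAt x ((A t).mulVec (x t)) t)
    {C : ℝ} (hC : ∀ u, N u ≤ C * ‖u‖)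
    (τ : ℝ) {r : ℝ} (hr : μ (A τ) * N (x τ) < r) :
    ∀ᶠ z in 𝓝[>] τ, slope (fun s => N (x s)) τ z < r := by
  set d : Fin n → ℝ := (A τ).mulVec (x τ) with hd
  have hsub : Tendsto (fun z => z - τ) (𝓝[>] τ) (𝓝[>] 0) := by
    apply tendsto_nhdsWithin_of_tendsto_nhds_of_eventually_within
    · exact ((continuous_id.sub continuous_const).tendsto' τ 0 (by simp)).mono_left
        nhdsWithin_le_nhds
    · filter_upwards [self_mem_nhdsWithin] with z hz
      exact sub_pos.2 (show τ < z from hz)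
  have htend1 : Tendsto (fun z => (opNorm N N (1 + (z - τ) • A τ) - 1) / (z - τ)) (𝓝[>] τ)
      (𝓝 (μ (A τ))) := (hμ (A τ)).comp hsub
  have htend2 : Tendsto (fun z => ‖x z - x τ - (z - τ) • d‖ / (z - τ)) (𝓝[>] τ) (𝓝 0) := by
    have h0 : Tendsto (fun z => ‖z - τ‖⁻¹ * ‖x z - x τ - (z - τ) • d‖) (𝓝[>] τ) (𝓝 0) :=
      (hasDerivAt_iff_tendsto.1 (hderiv τ)).mono_left nhdsWithin_le_nhds
    refine h0.congr' ?_
    filter_upwards [self_mem_nhdsWithin] with z hz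
    rw [Real.norm_eq_abs, abs_of_pos (sub_pos.2 hz), inv_mul_eq_div]
  have hcomb : Tendsto
      (fun z => (opNorm N N (1 + (z - τ) • A τ) - 1) / (z - τ) * N (x τ)
        + C * (‖x z - x τ - (z - τ) • d‖ / (z - τ))) (𝓝[>] τ) (𝓝 (μ (A τ) * N (x τ))) := by
    have := (htend1.mul_const (N (x τ))).add (htend2.const_mul C)
    simpa using this
  filter_upwards [hcomb.eventually_lt_const hr, self_mem_nhdsWithin] with z hlt hz
  have hzτ : 0 < z - τ := sub_pos.2 hz
  have hkey : N (x z) ≤ opNorm N N (1 + (z - τ) • A τ) * N (x τ)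
      + C * ‖x z - x τ - (z - τ) • d‖ := by
    have hmv : (1 + (z - τ) • A τ).mulVec (x τ) = x τ + (z - τ) • d := by
      rw [Matrix.add_mulVec, Matrix.one_mulVec, Matrix.smul_mulVec]
    calc N (x z) ≤ N ((1 + (z - τ) • A τ).mulVec (x τ))
          + N (x z - (1 + (z - τ) • A τ).mulVec (x τ)) := hN.sub_le _ _
      _ ≤ opNorm N N (1 + (z - τ) • A τ) * N (x τ) + C * ‖x z - x τ - (z - τ) • d‖ := by
          apply add_le_add (hN.opNorm_mulVec_le _ _)
          rw [hmv]
          calc N (x z - (x τ + (z - τ) • d)) ≤ C * ‖x z - (x τ + (z - τ) • d)‖ := hC _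
            _ = C * ‖x z - x τ - (z - τ) • d‖ := by rw [sub_add_eq_sub_sub]
  rw [slope_def_field]
  calc (N (x z) - N (x τ)) / (z - τ)
      ≤ (opNorm N N (1 + (z - τ) • A τ) * N (x τ) + C * ‖x z - x τ - (z - τ) • d‖
          - N (x τ)) / (z - τ) := by gcongr
    _ = (opNorm N N (1 + (z - τ) • A τ) - 1) / (z - τ) * N (x τ)
        + C * (‖x z - x τ - (z - τ) • d‖ / (z - τ)) := by field_simp; ring
    _ < r := hlt

open MeasureTheory in
/-- Coppel's inequality: `|x(t)| ≤ exp(∫ μ(A(s)) ds) |x₀|` for solutions of `ẋ = A(t)x`. -/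
theorem coppel_inequality {n : ℕ}
    (N : (Fin n → ℝ) → ℝ) (hN : IsNorm N)
    (μ : Matrix (Fin n) (Fin n) ℝ → ℝ) (hμ : IsMatMeasure N μ)
    (A : ℝ → Matrix (Fin n) (Fin n) ℝ) (x : ℝ → Fin n → ℝ) (t₀ : ℝ) (x₀ : Fin n → ℝ)
    (hinit : x t₀ = x₀)
    (hderiv : ∀ t : ℝ, HasDerivAt x ((A t).mulVec (x t)) t)
    (hint : ∀ t : ℝ, IntervalIntegrable (fun s => μ (A s)) volume t₀ t)
    (t : ℝ) (ht : t₀ ≤ t) :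
    N (x t) ≤ Real.exp (∫ s in t₀..t, μ (A s)) * N x₀ := by
  classical
  obtain ⟨C, hC0, hC⟩ := hN.exists_upper
  set m : ℝ → ℝ := fun s => μ (A s) with hm
  set I : ℝ := ∫ s in t₀..t, m s with hI
  set f : ℝ → ℝ := fun s => N (x s) with hf
  have hxc : Continuous x := by
    rw [continuous_iff_continuousAt]; exact fun s => (hderiv s).continuousAt
  have hfc : Continuous f := hN.continuous.comp hxc
  have hN0 : 0 ≤ N x₀ := hN.nonneg x₀
  -- main estimate with epsilon
  have key : ∀ ε : ℝ, 0 < ε → f t ≤ (N x₀ + ε) * Real.exp (I + ε) := by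
    intro ε hε
    have hmi : IntegrableOn m (Ioc t₀ t) volume :=
      (intervalIntegrable_iff_integrableOn_Ioc_of_le ht).1 (hint t)
    obtain ⟨g, hg_lt, hg_lsc, hg_int, hg_top, hg_sum⟩ :=
      exists_lt_lowerSemicontinuous_integral_lt (μ := volume.restrict (Ioc t₀ t)) m hmi hε
    set G : ℝ → ℝ := fun z => ∫ s in t₀..z, (g s).toReal with hG
    have hGIcc : IntegrableOn (fun s => (g s).toReal) (Icc t₀ t) volume :=
      (integrableOn_Icc_iff_integrableOn_Ioc).2 hg_int
    have hGsub : ∀ {a b : ℝ}, t₀ ≤ a → a ≤ b → b ≤ t →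
        IntervalIntegrable (fun s => (g s).toReal) volume a b := by
      intro a b hab h1 h2
      rw [intervalIntegrable_iff_integrableOn_Ioc_of_le h1]
      exact hGIcc.mono_set fun s hs => ⟨hab.trans hs.1.le, hs.2.trans h2⟩
    have hGc : ContinuousOn G (Icc t₀ t) := by
      have := intervalIntegral.continuousOn_primitive_interval (a := t₀) (b := t) (μ := volume)
        (f := fun s => (g s).toReal) (by rwa [uIcc_of_le ht])
      rwa [uIcc_of_le ht] at this
    set B : ℝ → ℝ := fun z => (N x₀ + ε) * Real.exp (G z) with hB
    set v : ℝ → ℝ := fun s => if g s = ⊤ then m s + 1 else (g s).toReal with hv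
    have hgne : ∀ s, g s ≠ ⊥ := fun s => ((EReal.bot_lt_coe (m s)).trans (hg_lt s)).ne'
    have hmv : ∀ s, m s < v s := by
      intro s
      by_cases h : g s = ⊤
      · simp only [hv, h, if_pos]; linarith
      · simp only [hv, h, if_neg, if_false]
        have h1 := hg_lt s
        lift g s to ℝ using ⟨h, hgne s⟩ with gs hgs
        exact_mod_cast h1
    have hBpos : ∀ z, 0 < B z := fun z => mul_pos (by linarith) (Real.exp_pos _)
    -- B slope lower bound
    have hB' : ∀ τ ∈ Ico t₀ t, ∀ r, r < v τ * B τ → ∀ᶠ z in 𝓝[>] τ, r < slope B τ z := by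
      intro τ hτ r hr
      have hBτ := hBpos τ
      have hrv : r / B τ < v τ := (div_lt_iff₀ hBτ).2 (by linarith [hr])
      obtain ⟨w, hw1, hw2⟩ := exists_between hrv
      have hwg : (w : EReal) < g τ := by
        by_cases h : g τ = ⊤
        · rw [h]; exact EReal.coe_lt_top w
        · have : v τ = (g τ).toReal := by simp only [hv, h, if_neg, if_false]
          rw [this] at hw2
          lift g τ to ℝ using ⟨h, hgne τ⟩ with gτ hgτ
          exact_mod_cast hw2
      have hnb : ∀ᶠ y in 𝓝 τ, (w : EReal) < g y := hg_lsc τ w hwg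
      obtain ⟨δ, hδ, hball⟩ := Metric.eventually_nhds_iff.1 hnb
      set y₀ : ℝ := min (τ + δ / 2) t with hy₀
      have hτy : τ < y₀ := lt_min (by linarith) hτ.2
      filter_upwards [Ioc_mem_nhdsGT_of_mem ⟨le_rfl, hτy⟩] with z hz
      have hzτ : 0 < z - τ := sub_pos.2 hz.1
      have hzt : z ≤ t := hz.2.trans (min_le_right _ _)
      -- G z - G τ = ∫ τ..z
      have hsplit : G z - G τ = ∫ s in τ..z, (g s).toReal := by
        have := intervalIntegral.integral_add_adjacent_intervals
          (hGsub le_rfl hτ.1 ((hz.1.le.trans hzt))) (hGsub hτ.1 hz.1.le hzt)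
        simp only [hG]; linarith [this]
      -- a.e. lower bound by w on Icc τ z
      have hnull : volume ({s | g s = ⊤} ∩ Ioc t₀ t) = 0 := by
        have h0 := hg_top
        rw [ae_restrict_iff' measurableSet_Ioc, ae_iff] at h0
        refine measure_mono_null ?_ h0
        rintro s ⟨hs1, hs2⟩
        have h3 : g s = ⊤ := hs1
        simp only [mem_setOf_eq, not_forall]
        exact ⟨hs2, by simp [h3]⟩
      have hae : (fun _ : ℝ => w) ≤ᵐ[volume.restrict (Icc τ z)] fun s => (g s).toReal := by
        have hbad : volume (({s | g s = ⊤} ∩ Ioc t₀ t) ∪ {τ}) = 0 :=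
          measure_union_null hnull (measure_singleton τ)
        rw [EventuallyLE, ae_restrict_iff' measurableSet_Icc, ae_iff]
        refine measure_mono_null ?_ hbad
        intro s hs
        simp only [mem_setOf_eq] at hs
        push_neg at hs
        obtain ⟨hs1, hs2⟩ := hs
        rcases eq_or_lt_of_le hs1.1 with heq | hτs
        · exact Or.inr (by simp [← heq])
        · left
          have hsball : dist s τ < δ := by
            rw [Real.dist_eq, abs_of_pos (sub_pos.2 hτs)]
            have h1 : s ≤ z := hs1.2
            have h2 : z ≤ τ + δ / 2 := hz.2.trans (min_le_left _ _)
            linarith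
          have hws := hball hsball
          by_cases hgt : g s = ⊤
          · exact ⟨hgt, lt_of_le_of_lt hτ.1 hτs, hs1.2.trans hzt⟩
          · exfalso
            lift g s to ℝ using ⟨hgt, hgne s⟩ with gs
            have : w < gs := by exact_mod_cast hws
            simp only [EReal.toReal_coe] at hs2
            linarith
      have hGge : w * (z - τ) ≤ G z - G τ := by
        rw [hsplit]
        have h1 : ∫ _ in τ..z, w ≤ ∫ s in τ..z, (g s).toReal :=
          intervalIntegral.integral_mono_ae_restrict hz.1.le intervalIntegrable_const
            (hGsub hτ.1 hz.1.le hzt) hae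
        simpa [mul_comm] using h1
      have hexp1 : w * (z - τ) + 1 ≤ Real.exp (G z - G τ) :=
        le_trans (Real.add_one_le_exp _) (Real.exp_le_exp.2 hGge)
      have hBz : B z - B τ = B τ * (Real.exp (G z - G τ) - 1) := by
        have hexp : Real.exp (G z) = Real.exp (G τ) * Real.exp (G z - G τ) := by
          rw [← Real.exp_add]; ring_nf
        simp only [hB]; rw [hexp]; ring
      have hslope : B τ * w ≤ slope B τ z := by
        rw [slope_def_field, le_div_iff₀ hzτ, hBz]
        nlinarith [hBτ.le]
      have hrw : r < B τ * w := by
        have := (div_lt_iff₀ hBτ).1 hw1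
        linarith
      exact lt_of_lt_of_le hrw hslope
    -- contact bound
    have hbound : ∀ τ ∈ Ico t₀ t, f τ = B τ → m τ * f τ < v τ * B τ := by
      intro τ _ hfB
      rw [hfB]
      exact mul_lt_mul_of_pos_right (hmv τ) (hBpos τ)
    have hf' : ∀ τ ∈ Ico t₀ t, ∀ r, m τ * f τ < r → ∃ᶠ z in 𝓝[>] τ, slope f τ z < r :=
      fun τ _ r hr => (slope_est hN hμ hderiv hC τ hr).frequently
    have hfa : f t₀ ≤ B t₀ := by
      have hG0 : G t₀ = 0 := by simp [hG]
      simp only [hf, hB, hG0, hinit, Real.exp_zero, mul_one]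
      linarith
    have hBc : ContinuousOn B (Icc t₀ t) :=
      continuousOn_const.mul (Real.continuous_exp.comp_continuousOn hGc)
    have happ := coppel_fence (f' := fun s => m s * f s) hfc.continuousOn hf' hfa hBc hB' hbound
      (right_mem_Icc.2 ht)
    have hGt : G t < I + ε := by
      have h1 : G t = ∫ s in Ioc t₀ t, (g s).toReal := intervalIntegral.integral_of_le ht
      have h2 : I = ∫ s in Ioc t₀ t, m s := intervalIntegral.integral_of_le ht
      rw [h1, h2]
      exact hg_sum
    calc f t ≤ B t := happ
      _ = (N x₀ + ε) * Real.exp (G t) := rfl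
      _ ≤ (N x₀ + ε) * Real.exp (I + ε) :=
          mul_le_mul_of_nonneg_left (Real.exp_le_exp.2 hGt.le) (by linarith)
  -- limit as ε → 0
  have hlim : Tendsto (fun ε : ℝ => (N x₀ + ε) * Real.exp (I + ε)) (𝓝[>] 0)
      (𝓝 (N x₀ * Real.exp I)) := by
    have hc : ContinuousAt (fun ε : ℝ => (N x₀ + ε) * Real.exp (I + ε)) 0 := by fun_prop
    have := Filter.Tendsto.mono_left hc (nhdsWithin_le_nhds : 𝓝[Set.Ioi (0:ℝ)] 0 ≤ 𝓝 0)
    simpa using this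
  have hfin : f t ≤ N x₀ * Real.exp I :=
    ge_of_tendsto hlim (eventually_nhdsWithin_of_forall fun ε hε => key ε hε)
  rw [mul_comm] at hfin
  exact hfin
end

section
/- (Comparison lemma for Metzler matrices) Let M ∈ ℝ^{m×m} be Metzler and let y : [t₀, t₁] → ℝ^m be a continuous function with y(t) ≥ 0 whose right-sided derivative satisfies D⁺y(t) ≤ M y(t) entrywise for all t ∈ [t₀, t₁). Then y(t) ≤ e^{M(t−t₀)} y(t₀) entrywise for all t ∈ [t₀, t₁]. -/
open Filter Topology

/-- The matrix exponential `e^A = Σ A^k / k!`. -/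
noncomputable def mexp {n : ℕ} (A : Matrix (Fin n) (Fin n) ℝ) : Matrix (Fin n) (Fin n) ℝ :=
  ∑' k : ℕ, ((k.factorial : ℝ)⁻¹) • A ^ k

/-- A real square matrix is Metzler if its off-diagonal entries are nonnegative. -/
def IsMetzler {n : ℕ} (A : Matrix (Fin n) (Fin n) ℝ) : Prop :=
  ∀ i j, i ≠ j → 0 ≤ A i j

section Aux

open NormedSpace

attribute [local instance] Matrix.linftyOpNormedAddCommGroup Matrix.linftyOpNormedRing
  Matrix.linftyOpNormedAlgebra

variable {n : ℕ}

lemma mexp_eq_exp (A : Matrix (Fin n) (Fin n) ℝ) : mexp A = exp A := by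
  rw [exp_eq_tsum ℝ]
  rfl

lemma entry_norm_le (B : Matrix (Fin n) (Fin n) ℝ) (i j : Fin n) : ‖B i j‖ ≤ ‖B‖ := by
  have h1 : ‖B i j‖₊ ≤ ∑ j' : Fin n, ‖B i j'‖₊ :=
    Finset.single_le_sum (f := fun j' => ‖B i j'‖₊) (fun _ _ => zero_le) (Finset.mem_univ j)
  have h2 : (∑ j' : Fin n, ‖B i j'‖₊) ≤ ‖B‖₊ := by
    rw [Matrix.linfty_opNNNorm_def]
    exact Finset.le_sup (f := fun i : Fin n => ∑ j' : Fin n, ‖B i j'‖₊) (Finset.mem_univ i)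
  exact_mod_cast h1.trans h2

/-- Entry evaluation as a continuous linear map. -/
noncomputable def entryCLM (i j : Fin n) : Matrix (Fin n) (Fin n) ℝ →L[ℝ] ℝ :=
  LinearMap.mkContinuous
    { toFun := fun B => B i j
      map_add' := fun _ _ => rfl
      map_smul' := fun _ _ => rfl }
    1 (fun B => by rw [one_mul]; exact entry_norm_le B i j)

lemma pow_entry_nonneg {A : Matrix (Fin n) (Fin n) ℝ} (hA : ∀ i j, 0 ≤ A i j) :
    ∀ (k : ℕ) (i j : Fin n), 0 ≤ (A ^ k) i j := by
  intro k
  induction k with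
  | zero =>
    intro i j
    rw [pow_zero]
    by_cases h : i = j <;> simp [Matrix.one_apply, h]
  | succ k ih =>
    intro i j
    rw [pow_succ, Matrix.mul_apply]
    exact Finset.sum_nonneg fun l _ => mul_nonneg (ih i l) (hA l j)

lemma exp_entry_nonneg {A : Matrix (Fin n) (Fin n) ℝ} (hA : ∀ i j, 0 ≤ A i j) (i j : Fin n) :
    0 ≤ exp A i j := by
  have hs : HasSum (fun k : ℕ => ((k.factorial : ℝ)⁻¹) • A ^ k) (exp A) :=
    exp_series_hasSum_exp' A
  have hs' := (entryCLM i j).hasSum hs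
  simp only [map_smul] at hs'
  refine hasSum_le (fun k => ?_) hasSum_zero hs'
  have : entryCLM i j (A ^ k) = (A ^ k) i j := rfl
  rw [this]
  exact smul_nonneg (by positivity) (pow_entry_nonneg hA k i j)

lemma exp_smul_one (c : ℝ) :
    exp (c • (1 : Matrix (Fin n) (Fin n) ℝ)) = Real.exp c • (1 : Matrix (Fin n) (Fin n) ℝ) := by
  have h1 : c • (1 : Matrix (Fin n) (Fin n) ℝ) = Matrix.diagonal (fun _ => c) := by
    rw [Matrix.smul_one_eq_diagonal]
  rw [h1, Matrix.exp_diagonal]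
  ext i j
  rcases eq_or_ne i j with rfl | h
  · simp [Matrix.diagonal_apply_eq, Pi.exp_def, ← Real.exp_eq_exp_ℝ, Matrix.one_apply]
  · simp [Matrix.diagonal_apply_ne _ h, Matrix.one_apply, h]

/-- Entrywise nonnegativity of `e^{sM}` for Metzler `M` and `s ≥ 0`. -/
lemma exp_smul_metzler_nonneg {M : Matrix (Fin n) (Fin n) ℝ} (hM : IsMetzler M) {s : ℝ}
    (hs : 0 ≤ s) (i j : Fin n) : 0 ≤ exp (s • M) i j := by
  set c : ℝ := ∑ k : Fin n, |M k k| with hc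
  have hcnn : ∀ k : Fin n, |M k k| ≤ c :=
    fun k => Finset.single_le_sum (fun l _ => abs_nonneg (M l l)) (Finset.mem_univ k)
  set N : Matrix (Fin n) (Fin n) ℝ := M + c • 1 with hN
  have hNnn : ∀ i j, 0 ≤ N i j := by
    intro i j
    rcases eq_or_ne i j with rfl | h
    · have : N i i = M i i + c := by simp [hN, Matrix.one_apply]
      rw [this]
      have := hcnn i
      have := neg_abs_le (M i i)
      linarith
    · have : N i j = M i j := by simp [hN, Matrix.one_apply, h]
      rw [this]
      exact hM i j h
  have hsum : s • N = s • M + (s * c) • (1 : Matrix (Fin n) (Fin n) ℝ) := by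
    rw [hN, smul_add, smul_smul]
  have hcomm : Commute (s • M) ((s * c) • (1 : Matrix (Fin n) (Fin n) ℝ)) :=
    (Commute.one_right (s • M)).smul_right _
  have hexp : exp (s • N) = Real.exp (s * c) • exp (s • M) := by
    rw [hsum, Matrix.exp_add_of_commute _ _ hcomm, exp_smul_one, mul_smul_comm, mul_one]
  have h1 : 0 ≤ exp (s • N) i j :=
    exp_entry_nonneg (fun i j => smul_nonneg hs (hNnn i j)) i j
  rw [hexp, Matrix.smul_apply] at h1
  rw [smul_eq_mul] at h1
  have hp := Real.exp_pos (s * c)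
  nlinarith [h1]

/-- Key comparison lemma, stated with `NormedSpace.exp`. -/
lemma metzler_key {m : ℕ}
    (M : Matrix (Fin m) (Fin m) ℝ) (hM : IsMetzler M)
    (t₀ t₁ : ℝ) (y : ℝ → Fin m → ℝ)
    (hcont : ContinuousOn y (Set.Icc t₀ t₁))
    (hder : ∀ s ∈ Set.Ico t₀ t₁, ∃ d : Fin m → ℝ,
      HasDerivWithinAt y d (Set.Ici s) s ∧ ∀ i, d i ≤ M.mulVec (y s) i)
    (t : ℝ) (ht : t ∈ Set.Icc t₀ t₁) (i : Fin m) :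
    y t i ≤ (exp ((t - t₀) • M)).mulVec (y t₀) i := by
  classical
  obtain ⟨ht0, ht1⟩ := ht
  set Φ : ℝ → Matrix (Fin m) (Fin m) ℝ := fun s => exp ((t - s) • M) with hΦ
  have hΦderiv : ∀ s : ℝ, HasDerivAt Φ (-(M * Φ s)) s := by
    intro s
    have h1 : HasDerivAt (fun u : ℝ => exp (u • M)) (M * exp ((t - s) • M)) (t - s) :=
      hasDerivAt_exp_smul_const' M (t - s)
    have h2 : HasDerivAt (fun u : ℝ => t - u) (-1 : ℝ) s := by
      simpa using (hasDerivAt_id s).const_sub t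
    have h3 := h1.scomp s h2
    rw [show -(M * Φ s) = (-1:ℝ) • (M * exp ((t - s) • M)) by simp [hΦ]]
    exact h3
  have hΦcont : Continuous Φ := by
    have : Continuous fun s : ℝ => (t - s) • M :=
      (continuous_const.sub continuous_id).smul continuous_const
    exact exp_continuous.comp this
  set D : ℝ → Fin m → ℝ := fun x =>
    if hx : x ∈ Set.Ico t₀ t₁ then (hder x hx).choose else 0 with hD
  have hDspec : ∀ x ∈ Set.Ico t₀ t₁,
      HasDerivWithinAt y (D x) (Set.Ici x) x ∧ ∀ i, D x i ≤ M.mulVec (y x) i := by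
    intro x hx
    simp only [hD, dif_pos hx]
    exact (hder x hx).choose_spec
  set f : ℝ → ℝ := fun s => ∑ j, Φ s i j * y s j with hf
  set f' : ℝ → ℝ := fun s => ∑ j, ((-(M * Φ s)) i j * y s j + Φ s i j * D s j) with hf'
  have hsub : Set.Icc t₀ t ⊆ Set.Icc t₀ t₁ := Set.Icc_subset_Icc le_rfl ht1
  have hfc : ContinuousOn f (Set.Icc t₀ t) := by
    apply continuousOn_finset_sum
    intro j _
    exact (((entryCLM i j).continuous.comp hΦcont).continuousOn).mul
      ((continuous_apply j).comp_continuousOn (hcont.mono hsub))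
  have hfd : ∀ x ∈ Set.Ico t₀ t, HasDerivWithinAt f (f' x) (Set.Ici x) x := by
    intro x hx
    have hx' : x ∈ Set.Ico t₀ t₁ := ⟨hx.1, lt_of_lt_of_le hx.2 ht1⟩
    obtain ⟨hyd, -⟩ := hDspec x hx'
    apply HasDerivWithinAt.fun_sum
    intro j _
    have hΦj : HasDerivWithinAt (fun s => Φ s i j) ((-(M * Φ x)) i j) (Set.Ici x) x := by
      have := ((entryCLM i j).hasFDerivAt.comp_hasDerivAt x (hΦderiv x)).hasDerivWithinAt
        (s := Set.Ici x)
      exact this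
    have hyj : HasDerivWithinAt (fun s => y s j) (D x j) (Set.Ici x) x := by
      have := (ContinuousLinearMap.proj (R := ℝ) (φ := fun _ : Fin m => ℝ)
        j).hasFDerivAt.comp_hasDerivWithinAt x hyd
      exact this
    exact hΦj.mul hyj
  have hbound : ∀ x ∈ Set.Ico t₀ t, f' x ≤ 0 := by
    intro x hx
    have hx' : x ∈ Set.Ico t₀ t₁ := ⟨hx.1, lt_of_lt_of_le hx.2 ht1⟩
    obtain ⟨-, hdle⟩ := hDspec x hx'
    have hcomm : M * Φ x = Φ x * M :=
      (((Commute.refl M).smul_right (t - x)).exp_right).eq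
    have hΦnn : ∀ a b, 0 ≤ Φ x a b := fun a b =>
      exp_smul_metzler_nonneg hM (by linarith [hx.2] : (0:ℝ) ≤ t - x) a b
    have heq : f' x = ∑ j, Φ x i j * (D x j - M.mulVec (y x) j) := by
      have e1 : f' x = (-(M * Φ x)).mulVec (y x) i + (Φ x).mulVec (D x) i := by
        rw [hf']
        simp [Matrix.mulVec, dotProduct, Finset.sum_add_distrib]
      have e2 : (-(M * Φ x)).mulVec (y x) i = -((Φ x).mulVec (M.mulVec (y x)) i) := by
        rw [hcomm, Matrix.neg_mulVec, Matrix.mulVec_mulVec, Pi.neg_apply]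
      have e3 : ∑ j, Φ x i j * (D x j - M.mulVec (y x) j)
          = (Φ x).mulVec (D x) i - (Φ x).mulVec (M.mulVec (y x)) i := by
        simp [Matrix.mulVec, dotProduct, mul_sub, Finset.sum_sub_distrib]
      rw [e1, e2, e3]
      ring
    rw [heq]
    exact Finset.sum_nonpos fun j _ =>
      mul_nonpos_of_nonneg_of_nonpos (hΦnn i j) (sub_nonpos.2 (hdle j))
  have hmain := image_le_of_deriv_right_le_deriv_boundary (B := fun _ => f t₀)
    (B' := fun _ => 0) hfc hfd le_rfl continuousOn_const
    (fun x _ => hasDerivWithinAt_const x _ (f t₀)) hbound ⟨ht0, le_rfl⟩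
  have hft : f t = y t i := by
    have : Φ t = 1 := by rw [hΦ]; simp [exp_zero]
    rw [hf]
    simp [this, Matrix.one_apply]
  have hft0 : f t₀ = (exp ((t - t₀) • M)).mulVec (y t₀) i := by
    rw [hf, hΦ]
    simp [Matrix.mulVec, dotProduct]
  rw [hft, hft0] at hmain
  exact hmain

end Aux

/-- Comparison lemma for Metzler matrices: if `D⁺y(t) ≤ M y(t)` entrywise and `y ≥ 0`,
then `y(t) ≤ e^{M(t−t₀)} y(t₀)` entrywise. -/
theorem metzler_comparison_lemma {m : ℕ}
    (M : Matrix (Fin m) (Fin m) ℝ) (hM : IsMetzler M)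
    (t₀ t₁ : ℝ) (h01 : t₀ ≤ t₁) (y : ℝ → Fin m → ℝ)
    (hcont : ContinuousOn y (Set.Icc t₀ t₁))
    (hpos : ∀ t ∈ Set.Icc t₀ t₁, ∀ i, 0 ≤ y t i)
    (hder : ∀ t ∈ Set.Ico t₀ t₁, ∃ d : Fin m → ℝ,
      HasDerivWithinAt y d (Set.Ici t) t ∧ ∀ i, d i ≤ M.mulVec (y t) i)
    (t : ℝ) (ht : t ∈ Set.Icc t₀ t₁) (i : Fin m) :
    y t i ≤ (mexp ((t - t₀) • M)).mulVec (y t₀) i := by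
  rw [mexp_eq_exp]
  exact metzler_key M hM t₀ t₁ y hcont hder t ht i
end
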